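/- Suppose φ satisfies φ'(t) ∼ t·φ''(t) for t > 0 with comparability constant c_φ, together with the Δ₂-condition for φ and φ*. Then for |s| < t/2 and t > 0, the averaged quantity |φ'(t+s)/(t+s) − φ'(t)/t| is bounded by c·(|s|/t)·φ''(t), where c depends only on c_φ and the Δ₂ constants. (Lipschitz estimate for the ratio φ'(t)/t via the fundamental theorem of calculus.) -/

import Mathlib

/-- Lipschitz estimate for the ratio `φ'(t)/t`: if `φ'(t) ∼ t φ''(t)` (with constant
`c_φ`) and `φ'` satisfies suitable `Δ₂`-type doubling, then for `|s| < t/2`,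
`|φ'(t+s)/(t+s) − φ'(t)/t| ≤ c (|s|/t) φ''(t)`. -/
theorem ratio_lipschitz_estimate
    (φ' φ'' : ℝ → ℝ) (cφ C : ℝ)
    (hcφ : 1 ≤ cφ) (hC : 1 ≤ C)
    (hderiv : ∀ t : ℝ, 0 < t → HasDerivAt φ' (φ'' t) t)
    (hcomp : ∀ t : ℝ, 0 < t → cφ⁻¹ * φ' t ≤ t * φ'' t ∧ t * φ'' t ≤ cφ * φ' t)
    (hmono : ∀ s t : ℝ, 0 ≤ s → s ≤ t → φ' s ≤ φ' t)
    (hnonneg : ∀ t : ℝ, 0 ≤ t → 0 ≤ φ' t)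
    (hΔ2 : ∀ t : ℝ, 0 ≤ t → φ' (2 * t) ≤ C * φ' t) :
    ∃ c : ℝ, 0 < c ∧ ∀ t s : ℝ, 0 < t → |s| < t / 2 →
      |φ' (t + s) / (t + s) - φ' t / t| ≤ c * (|s| / t) * φ'' t := by
  have hcφ0 : (0:ℝ) < cφ := lt_of_lt_of_le one_pos hcφ
  refine ⟨4 * cφ * (cφ + 1) * C, by positivity, ?_⟩
  intro t s ht hs
  set g : ℝ → ℝ := fun u => φ' u / u with hg
  set g' : ℝ → ℝ := fun u => (φ'' u * u - φ' u * 1) / u ^ 2 with hg'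
  set S : Set ℝ := Set.Icc (t / 2) (3 * t / 2) with hS
  have hposS : ∀ u ∈ S, 0 < u := fun u hu => lt_of_lt_of_le (by linarith) hu.1
  have hderivS : ∀ u ∈ S, HasDerivWithinAt g (g' u) S u := by
    intro u hu
    have hu0 := hposS u hu
    exact (((hderiv u hu0).div (hasDerivAt_id u) (ne_of_gt hu0))).hasDerivWithinAt
  set M : ℝ := 4 * cφ * (cφ + 1) * C * φ'' t / t with hM
  have hφ''t : 0 ≤ φ'' t := by
    have h := (hcomp t ht).1
    have h0 : 0 ≤ cφ⁻¹ * φ' t := mul_nonneg (by positivity) (hnonneg t ht.le)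
    nlinarith
  have hbound : ∀ u ∈ S, ‖g' u‖ ≤ M := by
    intro u hu
    have hu0 := hposS u hu
    have hφ'u : 0 ≤ φ' u := hnonneg u hu0.le
    have h1 : u * φ'' u ≤ cφ * φ' u := (hcomp u hu0).2
    have h2 : 0 ≤ u * φ'' u := le_trans (mul_nonneg (by positivity) hφ'u) (hcomp u hu0).1
    have hnum : |φ'' u * u - φ' u * 1| ≤ (cφ + 1) * φ' u := by
      rw [abs_sub_le_iff]
      constructor <;> nlinarith
    -- φ' u ≤ C * φ' t
    have hu2 : u ≤ 2 * t := le_trans hu.2 (by linarith)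
    have hφ'le : φ' u ≤ C * φ' t :=
      le_trans (hmono u (2 * t) hu0.le hu2) (hΔ2 t ht.le)
    -- φ' t ≤ cφ * (t * φ'' t)
    have hφ't : φ' t ≤ cφ * (t * φ'' t) := by
      have h := (hcomp t ht).1
      have : cφ⁻¹ * φ' t ≤ t * φ'' t := h
      calc φ' t = cφ * (cφ⁻¹ * φ' t) := by field_simp
        _ ≤ cφ * (t * φ'' t) := by nlinarith
    have hu2sq : t ^ 2 / 4 ≤ u ^ 2 := by nlinarith [hu.1]
    rw [Real.norm_eq_abs, hg', abs_div, abs_of_pos (by positivity : (0:ℝ) < u ^ 2)]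
    rw [div_le_iff₀ (by positivity : (0:ℝ) < u ^ 2)]
    have key : (cφ + 1) * φ' u ≤ (cφ + 1) * (C * (cφ * (t * φ'' t))) := by
      have : φ' u ≤ C * (cφ * (t * φ'' t)) := le_trans hφ'le (by nlinarith)
      nlinarith
    calc |φ'' u * u - φ' u * 1| ≤ (cφ + 1) * (C * (cφ * (t * φ'' t))) :=
          le_trans hnum key
      _ = M * (t ^ 2 / 4) := by rw [hM]; field_simp
      _ ≤ M * u ^ 2 := by
          have hM0 : 0 ≤ M := by rw [hM]; positivity
          exact mul_le_mul_of_nonneg_left hu2sq hM0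
  have habs := abs_lt.mp hs
  have htS : t ∈ S := ⟨by linarith, by linarith⟩
  have htsS : t + s ∈ S := ⟨by linarith [habs.1], by linarith [habs.2]⟩
  have := Convex.norm_image_sub_le_of_norm_hasDerivWithin_le hderivS hbound
    (convex_Icc _ _) htS htsS
  rw [Real.norm_eq_abs, Real.norm_eq_abs] at this
  simp only [hg, add_sub_cancel_left] at this
  calc |φ' (t + s) / (t + s) - φ' t / t| ≤ M * |s| := this
    _ = 4 * cφ * (cφ + 1) * C * (|s| / t) * φ'' t := by rw [hM]; field_simp
    _ ≤ 4 * cφ * (cφ + 1) * C * (|s| / t) * φ'' t := le_refl _
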